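/- Let i₁ > 1. Any word w of length 2i₁ over a two-letter alphabet satisfying w_t = w_{t+i₁} for all 0 < t < i₁ contains a square vv with |v| ∈ {1, i₁}. Moreover, over a three-letter alphabet there exists such a word with no square vv with |v| ∈ {1, i₁}. -/

import Mathlib

/-- Auxiliary word over three letters. -/
def myW (i₁ : ℕ) : ℕ → Fin 3 := fun x =>
  if x = i₁ then 2
  else if x = 2 * i₁ then (if i₁ % 2 = 0 then 0 else 1)
  else (if x % i₁ % 2 = 0 then 0 else 1)

open Fin.NatCast in
/-- `minA(1, i₁) = 3`: every word of length `2 * i₁` over a two-letter alphabet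
satisfying the invariance `w t = w (t + i₁)` for `0 < t < i₁` contains a square
`v ++ v` with `|v| ∈ {1, i₁}`, while over a three-letter alphabet such a word
without squares of these half-lengths exists. -/
theorem minA_one_i_eq_three (i₁ : ℕ) (hi : 1 < i₁) :
    (∀ w : ℕ → Fin 2, (∀ t, 1 ≤ t → t < i₁ → w t = w (t + i₁)) →
      ∃ i ∈ ({1, i₁} : Set ℕ), ∃ x, 1 ≤ x ∧ x + 2 * i - 1 ≤ 2 * i₁ ∧
        ∀ t < i, w (x + t) = w (x + t + i)) ∧
    (∃ w : ℕ → Fin 3, (∀ t, 1 ≤ t → t < i₁ → w t = w (t + i₁)) ∧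
      ¬ ∃ i ∈ ({1, i₁} : Set ℕ), ∃ x, 1 ≤ x ∧ x + 2 * i - 1 ≤ 2 * i₁ ∧
        ∀ t < i, w (x + t) = w (x + t + i)) := by
  constructor
  · intro w hw
    by_cases h1 : ∃ x, 1 ≤ x ∧ x + 1 ≤ 2 * i₁ ∧ w x = w (x + 1)
    · obtain ⟨x, hx1, hx2, hx3⟩ := h1
      refine ⟨1, by simp, x, hx1, by omega, ?_⟩
      intro t ht
      interval_cases t
      simpa using hx3
    · push_neg at h1
      have flip : ∀ a b : Fin 2, a ≠ b → b = a + 1 := by decide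
      have key : ∀ k, 1 + k ≤ 2 * i₁ → w (1 + k) = w 1 + (k : Fin 2) := by
        intro k
        induction k with
        | zero => intro _; simp
        | succ n ih =>
          intro hk
          have h2 := h1 (1 + n) (by omega) (by omega)
          have h3 := flip _ _ h2
          have e : 1 + (n + 1) = (1 + n) + 1 := by omega
          rw [e, h3, ih (by omega)]
          push_cast
          exact add_assoc _ _ _
      have hz : (i₁ : Fin 2) = 0 := by
        have h4 := hw 1 le_rfl hi
        rw [key i₁ (by omega)] at h4
        exact left_eq_add.mp h4
      refine ⟨i₁, by simp, 1, le_rfl, by omega, ?_⟩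
      intro t ht
      rcases Nat.lt_or_ge (1 + t) i₁ with h | h
      · exact hw (1 + t) (by omega) h
      · rw [show 1 + t + i₁ = 1 + (t + i₁) from by omega,
          key t (by omega), key (t + i₁) (by omega)]
        congr 1
        push_cast
        rw [hz]
        simp
  · refine ⟨myW i₁, ?_, ?_⟩
    · intro t ht1 ht2
      have h1 : t ≠ i₁ := by omega
      have h2 : t ≠ 2 * i₁ := by omega
      have h3 : t + i₁ ≠ i₁ := by omega
      have h4 : t + i₁ ≠ 2 * i₁ := by omega
      simp only [myW, if_neg h1, if_neg h2, if_neg h3, if_neg h4, Nat.add_mod_right]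
    · rintro ⟨i, hmem, x, hx1, hx2, hsq⟩
      simp only [Set.mem_insert_iff, Set.mem_singleton_iff] at hmem
      rcases hmem with rfl | hmem
      · -- i = 1 : adjacent letters are always distinct
        have h := hsq 0 (by norm_num)
        simp only [Nat.add_zero, myW] at h
        have hx2' : x + 1 ≤ 2 * i₁ := by omega
        rcases eq_or_ne x i₁ with hxe0 | hxi
        · rw [if_pos hxe0, if_neg (show x + 1 ≠ i₁ by omega),
            if_neg (show x + 1 ≠ 2 * i₁ by omega)] at h
          split at h <;> exact absurd h (by decide)
        · rcases eq_or_ne (x + 1) i₁ with hxe | hne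
          · rw [if_neg hxi, if_neg (show x ≠ 2 * i₁ by omega), if_pos hxe] at h
            split at h <;> exact absurd h (by decide)
          · rcases eq_or_ne (x + 1) (2 * i₁) with hxe | hne2
            · rw [if_neg hxi, if_neg (show x ≠ 2 * i₁ by omega), if_neg hne,
                if_pos hxe] at h
              have hx : x % i₁ = i₁ - 1 := by
                obtain ⟨d, rfl⟩ : ∃ d, x = i₁ + d := ⟨x - i₁, by omega⟩
                rw [Nat.add_mod_left]
                have : d = i₁ - 1 := by omega
                rw [this, Nat.mod_eq_of_lt (by omega)]
              simp only [hx] at h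
              have hpar : (i₁ - 1) % 2 ≠ i₁ % 2 := by omega
              split at h <;> split at h <;>
                first
                  | exact absurd h (by decide)
                  | omega
            · rw [if_neg hxi, if_neg (show x ≠ 2 * i₁ by omega), if_neg hne,
                if_neg hne2] at h
              have hmod : (x + 1) % i₁ = x % i₁ + 1 := by
                rcases Nat.lt_or_ge x i₁ with hlt | hge
                · rw [Nat.mod_eq_of_lt hlt, Nat.mod_eq_of_lt (by omega)]
                · obtain ⟨d, rfl⟩ : ∃ d, x = i₁ + d := ⟨x - i₁, by omega⟩
                  rw [show i₁ + d + 1 = i₁ + (d + 1) from by omega,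
                    Nat.add_mod_left, Nat.add_mod_left,
                    Nat.mod_eq_of_lt (by omega), Nat.mod_eq_of_lt (by omega)]
              simp only [hmod] at h
              have hpar : x % i₁ % 2 ≠ (x % i₁ + 1) % 2 := by omega
              split at h <;> split at h <;>
                first
                  | exact absurd h (by decide)
                  | omega
      · -- i = i₁ : the only possible position is x = 1, but w i₁ ≠ w (2 i₁)
        rw [hmem] at hx2 hsq
        have hx : x = 1 := by omega
        subst hx
        have h := hsq (i₁ - 1) (by omega)
        rw [show 1 + (i₁ - 1) = i₁ from by omega] at h
        simp only [myW] at h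
        rw [if_true, if_neg (show i₁ + i₁ ≠ i₁ by omega),
          if_pos (show i₁ + i₁ = 2 * i₁ by ring)] at h
        split at h <;> exact absurd h (by decide)
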